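/- Riccati-type comparison: Let q be a positive real number and C̃ > 0 a constant. Suppose f: (0, ∞) → ℝ is differentiable and satisfies the differential inequality (1/q) f(t)² + f'(t) − q C̃ ≤ 0 for all t > 0, together with lim_{t→0⁺} f(t) = +∞. Then for all t > 0, f(t) ≤ q √C̃ · coth(√C̃ · t) ≤ q (1/t + √C̃). -/

import Mathlib

open Real Filter Set

lemma coth_le_aux (s : ℝ) (hs : 0 < s) : Real.cosh s / Real.sinh s ≤ 1 / s + 1 := by
  have hsinh : 0 < Real.sinh s := Real.sinh_pos_iff.mpr hs
  rw [div_le_iff₀ hsinh, Real.cosh_eq, Real.sinh_eq, Real.exp_neg]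
  have hx : 0 < Real.exp s := Real.exp_pos s
  have hexp : 2 * s + 1 ≤ Real.exp s * Real.exp s := by
    have h := Real.add_one_le_exp (2 * s)
    rw [two_mul, Real.exp_add] at h
    linarith
  rw [← sub_nonneg]
  have key : (1 / s + 1) * ((Real.exp s - (Real.exp s)⁻¹) / 2) - (Real.exp s + (Real.exp s)⁻¹) / 2
      = (Real.exp s * Real.exp s - (2*s+1)) / (2 * s * Real.exp s) := by
    field_simp
    ring
  rw [key]
  exact div_nonneg (by linarith) (by positivity)


lemma coth_hasDerivAt (c ε t : ℝ) (hc : 0 < c) (ht : ε < t) :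
    HasDerivAt (fun t => Real.cosh (c * (t - ε)) / Real.sinh (c * (t - ε)))
      (-(c / Real.sinh (c * (t - ε)) ^ 2)) t := by
  have hu : HasDerivAt (fun t => c * (t - ε)) c t := by
    simpa using ((hasDerivAt_id t).sub_const ε).const_mul c
  have hcosh := (Real.hasDerivAt_cosh (c * (t - ε))).comp t hu
  have hsinh := (Real.hasDerivAt_sinh (c * (t - ε))).comp t hu
  have hpos : 0 < Real.sinh (c * (t - ε)) :=
    Real.sinh_pos_iff.mpr (mul_pos hc (sub_pos.mpr ht))
  have hne : Real.sinh (c * (t - ε)) ≠ 0 := ne_of_gt hpos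
  have hS2 : Real.sinh (c * (t - ε)) ^ 2 ≠ 0 := pow_ne_zero 2 hne
  have h := hcosh.div hsinh hne
  convert h using 1
  iterate 3 rfl
  have hid : Real.cosh (c*(t-ε))^2 - Real.sinh (c*(t-ε))^2 = 1 := Real.cosh_sq_sub_sinh_sq _
  show -(c / Real.sinh (c * (t - ε)) ^ 2) =
    (Real.sinh (c*(t-ε)) * c * Real.sinh (c*(t-ε)) - Real.cosh (c*(t-ε)) * (Real.cosh (c*(t-ε)) * c)) /
      Real.sinh (c*(t-ε)) ^ 2
  rw [← neg_div, div_eq_div_iff hS2 hS2]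
  linear_combination (c * Real.sinh (c*(t-ε))^2) * hid

lemma riccati_aux (q C C' ε t₀ : ℝ) (hq : 0 < q) (hC : 0 < C) (hCC' : C < C')
    (hε : 0 < ε) (hεt : ε < t₀) (f : ℝ → ℝ)
    (hdiff : ∀ t, 0 < t → DifferentiableAt ℝ f t)
    (hineq : ∀ t, 0 < t → (1 / q) * f t ^ 2 + deriv f t - q * C ≤ 0) :
    f t₀ ≤ q * Real.sqrt C' *
      (Real.cosh (Real.sqrt C' * (t₀ - ε)) / Real.sinh (Real.sqrt C' * (t₀ - ε))) := by
  by_contra hcon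
  push_neg at hcon
  set c := Real.sqrt C' with hc_def
  have hC' : 0 < C' := hC.trans hCC'
  have hc : 0 < c := Real.sqrt_pos.mpr hC'
  have hc2 : c ^ 2 = C' := Real.sq_sqrt hC'.le
  set g : ℝ → ℝ := fun t => q * c * (Real.cosh (c * (t - ε)) / Real.sinh (c * (t - ε))) with hg_def
  have hcon' : g t₀ < f t₀ := hcon
  have hsinh_pos : ∀ t, ε < t → 0 < Real.sinh (c * (t - ε)) := fun t ht =>
    Real.sinh_pos_iff.mpr (mul_pos hc (sub_pos.mpr ht))
  have hgderiv : ∀ t, ε < t → HasDerivAt g (-(q * C' / Real.sinh (c * (t - ε)) ^ 2)) t := by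
    intro t ht
    have h := (coth_hasDerivAt c ε t hc ht).const_mul (q * c)
    convert h using 1
    iterate 2 rfl
    rw [← hc2]; ring
  have hgcont : ∀ t, ε < t → ContinuousAt g t := fun t ht => (hgderiv t ht).continuousAt
  have hg_sq : ∀ t, ε < t →
      (1/q) * g t ^ 2 = q * C' + q * C' / Real.sinh (c * (t - ε)) ^ 2 := by
    intro t ht
    have hS := (hsinh_pos t ht).ne'
    have hid := Real.cosh_sq_sub_sinh_sq (c * (t - ε))
    simp only [hg_def]
    rw [← hc2]
    generalize Real.sinh (c * (t - ε)) = S at hS hid ⊢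
    generalize Real.cosh (c * (t - ε)) = K at hid ⊢
    field_simp
    linear_combination hid
  -- find a ∈ (ε, t₀) with f a < g a
  have htend : Tendsto g (nhdsWithin ε (Ioi ε)) atTop := by
    have h1 : Tendsto (fun t => Real.sinh (c * (t - ε))) (nhdsWithin ε (Ioi ε))
        (nhdsWithin 0 (Ioi 0)) := by
      rw [tendsto_nhdsWithin_iff]
      constructor
      · have hcont : ContinuousAt (fun t => Real.sinh (c * (t - ε))) ε := by fun_prop
        have : Real.sinh (c * (ε - ε)) = 0 := by simp
        simpa [this] using hcont.continuousWithinAt.tendsto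
      · filter_upwards [self_mem_nhdsWithin] with t ht
        exact hsinh_pos t ht
    have h2 : Tendsto (fun t => (Real.sinh (c * (t - ε)))⁻¹) (nhdsWithin ε (Ioi ε)) atTop :=
      tendsto_inv_nhdsGT_zero.comp h1
    have h3 : Tendsto (fun t => Real.cosh (c * (t - ε))) (nhdsWithin ε (Ioi ε)) (nhds 1) := by
      have hcont : ContinuousAt (fun t => Real.cosh (c * (t - ε))) ε := by fun_prop
      have : Real.cosh (c * (ε - ε)) = 1 := by simp
      simpa [this] using hcont.continuousWithinAt.tendsto
    have h4 := h3.pos_mul_atTop one_pos h2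
    have h5 := (tendsto_const_nhds (x := q * c)).pos_mul_atTop (mul_pos hq hc) h4
    refine h5.congr fun t => ?_
    simp [hg_def, div_eq_mul_inv, mul_assoc]
  have hft : Tendsto f (nhdsWithin ε (Ioi ε)) (nhds (f ε)) :=
    ((hdiff ε hε).continuousAt.continuousWithinAt.tendsto)
  have hfa : ∀ᶠ t in nhdsWithin ε (Ioi ε), 0 < -f t + g t :=
    (hft.neg.add_atTop htend).eventually_gt_atTop 0
  have hlt : ∀ᶠ t in nhdsWithin ε (Ioi ε), t < t₀ := by
    filter_upwards [mem_nhdsWithin_of_mem_nhds (Iio_mem_nhds hεt)] with t ht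
    exact ht
  obtain ⟨a, hfa_lt, ha_t₀, haε⟩ :
      ∃ a, 0 < -f a + g a ∧ a < t₀ ∧ a ∈ Ioi ε :=
    ((hfa.and hlt).and self_mem_nhdsWithin).exists.imp fun a h => ⟨h.1.1, h.1.2, h.2⟩
  have ha_lt : f a < g a := by linarith
  have ha0 : 0 < a := hε.trans haε
  -- the supremum of the set where f ≤ g
  set S : Set ℝ := {t | t ∈ Icc a t₀ ∧ f t ≤ g t} with hS_def
  have haS : a ∈ S := ⟨⟨le_refl a, ha_t₀.le⟩, ha_lt.le⟩
  have hS_ne : S.Nonempty := ⟨a, haS⟩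
  have hS_bdd : BddAbove S := ⟨t₀, fun t ht => ht.1.2⟩
  have hS_closed : IsClosed S := by
    have hrw : S = Icc a t₀ ∩ (fun t => g t - f t) ⁻¹' Ici 0 := by
      ext t
      simp only [hS_def, mem_setOf_eq, mem_inter_iff, mem_preimage, mem_Ici, sub_nonneg]
    rw [hrw]
    refine ContinuousOn.preimage_isClosed_of_isClosed ?_ isClosed_Icc isClosed_Ici
    intro t ht
    exact ((hgcont t (haε.trans_le ht.1)).sub
      (hdiff t (ha0.trans_le ht.1)).continuousAt).continuousWithinAt
  set s := sSup S with hs_def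
  have hs_mem : s ∈ S := hS_closed.csSup_mem hS_ne hS_bdd
  have hsε : ε < s := haε.trans_le hs_mem.1.1
  have hs0 : 0 < s := hε.trans hsε
  have hfs_le : f s ≤ g s := hs_mem.2
  have hs_lt_t₀ : s < t₀ := by
    rcases lt_or_eq_of_le hs_mem.1.2 with h | h
    · exact h
    · rw [h] at hfs_le; exact absurd hfs_le (not_le.mpr hcon')
  have hgt : ∀ t, s < t → t ≤ t₀ → g t < f t := by
    intro t hst htt
    by_contra hle
    push_neg at hle
    have htS : t ∈ S := ⟨⟨hs_mem.1.1.trans hst.le, htt⟩, hle⟩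
    exact absurd (le_csSup hS_bdd htS) (not_le.mpr hst)
  have hfs_ge : g s ≤ f s := by
    have hcont : Tendsto (fun t => f t - g t) (nhdsWithin s (Ioi s)) (nhds (f s - g s)) :=
      ((hdiff s hs0).continuousAt.sub (hgcont s hsε)).continuousWithinAt.tendsto
    have hev : ∀ᶠ t in nhdsWithin s (Ioi s), 0 ≤ f t - g t := by
      filter_upwards [Ioo_mem_nhdsGT_of_mem ⟨le_refl s, hs_lt_t₀⟩] with t ht
      exact sub_nonneg.mpr (hgt t ht.1 ht.2.le).le
    have := ge_of_tendsto hcont hev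
    linarith
  have hfs : f s = g s := le_antisymm hfs_le hfs_ge
  -- derivative of f - g at s is negative
  have hfd : HasDerivAt f (deriv f s) s := (hdiff s hs0).hasDerivAt
  have hgd := hgderiv s hsε
  have hd := hfd.sub hgd
  set D := deriv f s - -(q * C' / Real.sinh (c * (s - ε)) ^ 2) with hD_def
  have hDneg : D < 0 := by
    have h1 := hineq s hs0
    have h2 := hg_sq s hsε
    rw [hfs] at h1
    have hqCC : q * C < q * C' := mul_lt_mul_of_pos_left hCC' hq
    simp only [hD_def]
    linarith
  -- slope argument for contradiction
  have hslope := hasDerivAt_iff_tendsto_slope.mp hd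
  have h5 : Tendsto (slope (fun t => f t - g t) s) (nhdsWithin s (Ioi s)) (nhds D) :=
    hslope.mono_left (nhdsWithin_mono s (fun x hx => ne_of_gt hx))
  have hev2 : ∀ᶠ t in nhdsWithin s (Ioi s), slope (fun t => f t - g t) s t < 0 :=
    h5.eventually_lt_const hDneg
  obtain ⟨t, hslope_t, hts⟩ :=
    (hev2.and (Ioo_mem_nhdsGT_of_mem ⟨le_refl s, hs_lt_t₀⟩)).exists
  rw [slope_def_field] at hslope_t
  have hts' : 0 < t - s := sub_pos.mpr hts.1
  have hneg : (f t - g t) - (f s - g s) < 0 := by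
    by_contra hge
    push_neg at hge
    exact absurd hslope_t (not_lt.mpr (div_nonneg hge hts'.le))
  rw [hfs] at hneg
  have : f t < g t := by linarith
  exact absurd (hgt t hts.1 hts.2.le) (not_lt.mpr this.le)



/-- (Riccati-type comparison) Let `q > 0` and `C̃ > 0`.  If
`f : (0,∞) → ℝ` is differentiable, satisfies the Riccati differential inequality
`(1/q) f(t)² + f'(t) − q C̃ ≤ 0` for all `t > 0`, and `f(t) → +∞` as `t → 0⁺`,
then for all `t > 0`
`f(t) ≤ q √C̃ · coth(√C̃ t) ≤ q (1/t + √C̃)`, where `coth s = cosh s / sinh s`. -/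
theorem riccati_comparison (q C : ℝ) (hq : 0 < q) (hC : 0 < C) (f : ℝ → ℝ)
    (hdiff : ∀ t, 0 < t → DifferentiableAt ℝ f t)
    (hineq : ∀ t, 0 < t → (1 / q) * f t ^ 2 + deriv f t - q * C ≤ 0)
    (hlim : Filter.Tendsto f (nhdsWithin 0 (Set.Ioi 0)) Filter.atTop) :
    ∀ t, 0 < t →
      f t ≤ q * Real.sqrt C * (Real.cosh (Real.sqrt C * t) / Real.sinh (Real.sqrt C * t)) ∧
      q * Real.sqrt C * (Real.cosh (Real.sqrt C * t) / Real.sinh (Real.sqrt C * t)) ≤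
        q * (1 / t + Real.sqrt C) := by
  intro t ht
  have hct : 0 < Real.sqrt C * t := mul_pos (Real.sqrt_pos.mpr hC) ht
  have hsinh : 0 < Real.sinh (Real.sqrt C * t) := Real.sinh_pos_iff.mpr hct
  constructor
  · -- first inequality via limit η → 0⁺
    set φ : ℝ → ℝ := fun η => q * Real.sqrt (C + η) *
      (Real.cosh (Real.sqrt (C + η) * (t - min η (t/2))) /
        Real.sinh (Real.sqrt (C + η) * (t - min η (t/2)))) with hφ_def
    have hφ0 : φ 0 = q * Real.sqrt C *
        (Real.cosh (Real.sqrt C * t) / Real.sinh (Real.sqrt C * t)) := by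
      have : min (0:ℝ) (t/2) = 0 := min_eq_left (by linarith)
      simp [hφ_def, this]
    have hφcont : ContinuousAt φ 0 := by
      have hden : Real.sinh (Real.sqrt (C + 0) * (t - min 0 (t/2))) ≠ 0 := by
        have : min (0:ℝ) (t/2) = 0 := min_eq_left (by linarith)
        rw [this, add_zero, sub_zero]
        exact hsinh.ne'
      exact ContinuousAt.mul (by fun_prop) (ContinuousAt.div (by fun_prop) (by fun_prop) hden)
    have hev : ∀ᶠ η in nhdsWithin (0:ℝ) (Ioi 0), f t ≤ φ η := by
      filter_upwards [self_mem_nhdsWithin] with η hη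
      have hη' : (0:ℝ) < η := hη
      have hεpos : 0 < min η (t/2) := lt_min hη' (by linarith)
      have hεt : min η (t/2) < t := lt_of_le_of_lt (min_le_right _ _) (by linarith)
      exact riccati_aux q C (C + η) (min η (t/2)) t hq hC (by linarith) hεpos hεt f hdiff hineq
    have htends : Tendsto φ (nhdsWithin (0:ℝ) (Ioi 0)) (nhds (φ 0)) :=
      hφcont.continuousWithinAt.tendsto
    have := ge_of_tendsto htends hev
    rwa [hφ0] at this
  · -- second inequality
    have h := coth_le_aux (Real.sqrt C * t) hct
    have h2 : q * Real.sqrt C * (Real.cosh (Real.sqrt C * t) / Real.sinh (Real.sqrt C * t)) ≤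
        q * Real.sqrt C * (1 / (Real.sqrt C * t) + 1) :=
      mul_le_mul_of_nonneg_left h (by positivity)
    have h3 : q * Real.sqrt C * (1 / (Real.sqrt C * t) + 1) = q * (1 / t + Real.sqrt C) := by
      have hs : Real.sqrt C ≠ 0 := (Real.sqrt_pos.mpr hC).ne'
      field_simp
    linarith [h3 ▸ h2]
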